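/- Statistical hiding of the masked opening in share conversion: let ℓ and κ be natural numbers, let M = 2^(ℓ+κ), and let U be the distribution on ℤ of a uniformly random element of {0, 1, …, M-1}. For a natural number x, let P_x be the pushforward of U under u ↦ (x : ℤ) - u (the distribution of the opened masked value ε = x - r). Then for all natural numbers x, x' with x < 2^ℓ and x' < 2^ℓ, the statistical distance between P_x and P_{x'} is at most 2^(-κ); that is, (1/2) · Σ_{z ∈ ℤ} |P_x(z) - P_{x'}(z)| ≤ 2^(-κ). -/

import Mathlib

/-- Statistical hiding of the masked opening in share conversion:
for secrets x, x' < 2^ℓ masked by a uniform r ∈ [0, 2^(ℓ+κ)), the distributions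
of the opened values ε = x - r are within statistical distance 2^(-κ). -/
theorem share_conversion_statistical_hiding (ℓ κ : ℕ)
    (U : PMF ℤ)
    (hU : U = PMF.map (fun u : Fin (2 ^ (ℓ + κ)) => (u : ℤ))
        (PMF.uniformOfFintype (Fin (2 ^ (ℓ + κ)))))
    (P : ℕ → PMF ℤ)
    (hP : ∀ x : ℕ, P x = PMF.map (fun u : ℤ => (x : ℤ) - u) U) :
    ∀ x x' : ℕ, x < 2 ^ ℓ → x' < 2 ^ ℓ →
      (1 / 2 : ℝ) * ∑' z : ℤ, |(P x z).toReal - (P x' z).toReal|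
        ≤ (2 : ℝ) ^ (-(κ : ℤ)) := by
  intro x x' hx hx'
  wlog hxx : x' ≤ x with H
  · have h := H ℓ κ U hU P hP x' x hx' hx (by omega)
    calc (1 / 2 : ℝ) * ∑' z : ℤ, |(P x z).toReal - (P x' z).toReal|
        = (1 / 2 : ℝ) * ∑' z : ℤ, |(P x' z).toReal - (P x z).toReal| := by
          congr 1
          exact tsum_congr fun z => abs_sub_comm _ _
      _ ≤ (2 : ℝ) ^ (-(κ : ℤ)) := h
  set M : ℕ := 2 ^ (ℓ + κ) with hM
  have hM0 : 0 < M := by positivity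
  -- value of U
  have hUval : ∀ u : ℤ, U u = if 0 ≤ u ∧ u < M then (M : ENNReal)⁻¹ else 0 := by
    intro u
    rw [hU]
    split_ifs with h
    · rw [PMF.map_apply, tsum_fintype,
        Finset.sum_eq_single (⟨u.toNat, by omega⟩ : Fin M)]
      · rw [if_pos (by simp; omega)]
        simp [PMF.uniformOfFintype_apply, hM]
      · intro b _ hb
        rw [if_neg]
        intro he
        apply hb
        ext
        simp only [Fin.val_mk]
        omega
      · simp
    · rw [PMF.map_apply, ENNReal.tsum_eq_zero]
      intro b
      rw [if_neg]
      intro he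
      have := b.isLt
      omega
  -- value of P y
  have hPval : ∀ (y : ℕ) (z : ℤ),
      ((P y) z).toReal = if (y : ℤ) - M < z ∧ z ≤ y then (M : ℝ)⁻¹ else 0 := by
    intro y z
    have hmap : (P y) z = U ((y : ℤ) - z) := by
      rw [hP, PMF.map_apply]
      refine Eq.trans (tsum_congr ?_) (tsum_ite_eq ((y : ℤ) - z) (fun _ => U ((y : ℤ) - z)))
      intro u
      split_ifs with h1 h2 h2
      · rw [h2]
      · omega
      · omega
      · rfl
    rw [hmap, hUval]
    split_ifs with h1 h2 h2
    · simp
    · omega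
    · omega
    · simp
  -- support of the difference
  set S : Finset ℤ :=
    Finset.Ioc (x' : ℤ) (x : ℤ) ∪ Finset.Ioc ((x' : ℤ) - M) ((x : ℤ) - M) with hS
  have hsupp : ∀ z ∉ S, |((P x) z).toReal - ((P x') z).toReal| = 0 := by
    intro z hz
    rw [hPval, hPval]
    simp only [hS, Finset.mem_union, Finset.mem_Ioc, not_or, not_and_or, not_lt, not_le] at hz
    split_ifs with h1 h2 h2
    · simp
    · exfalso; omega
    · exfalso; omega
    · simp
  rw [tsum_eq_sum hsupp]
  have hbound : ∀ z ∈ S, |((P x) z).toReal - ((P x') z).toReal| ≤ (M : ℝ)⁻¹ := by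
    intro z _
    rw [hPval, hPval]
    have hMR : (0 : ℝ) ≤ (M : ℝ)⁻¹ := by positivity
    split_ifs <;> simp [abs_of_nonneg, hMR]
  have hcard : (S.card : ℝ) ≤ 2 * 2 ^ ℓ := by
    have h1 : S.card ≤ (Finset.Ioc (x' : ℤ) (x : ℤ)).card
        + (Finset.Ioc ((x' : ℤ) - M) ((x : ℤ) - M)).card := Finset.card_union_le _ _
    have h2 : (Finset.Ioc (x' : ℤ) (x : ℤ)).card = ((x : ℤ) - x').toNat := Int.card_Ioc _ _
    have h3 : (Finset.Ioc ((x' : ℤ) - M) ((x : ℤ) - M)).card = ((x : ℤ) - x').toNat := by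
      rw [Int.card_Ioc]; congr 1; ring
    have h4 : S.card ≤ 2 * 2 ^ ℓ := by
      have : ((x : ℤ) - x').toNat ≤ 2 ^ ℓ := by omega
      omega
    exact_mod_cast h4
  have hsum : ∑ z ∈ S, |((P x) z).toReal - ((P x') z).toReal| ≤ S.card * (M : ℝ)⁻¹ := by
    calc ∑ z ∈ S, |((P x) z).toReal - ((P x') z).toReal| ≤ S.card • (M : ℝ)⁻¹ :=
          Finset.sum_le_card_nsmul _ _ _ hbound
      _ = S.card * (M : ℝ)⁻¹ := by simp [nsmul_eq_mul]
  have hMR : (0 : ℝ) < (M : ℝ) := by positivity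
  calc (1 / 2 : ℝ) * ∑ z ∈ S, |((P x) z).toReal - ((P x') z).toReal|
      ≤ (1 / 2 : ℝ) * (S.card * (M : ℝ)⁻¹) := by
        apply mul_le_mul_of_nonneg_left hsum (by norm_num)
    _ ≤ (1 / 2 : ℝ) * ((2 * 2 ^ ℓ) * (M : ℝ)⁻¹) := by
        apply mul_le_mul_of_nonneg_left _ (by norm_num)
        apply mul_le_mul_of_nonneg_right hcard (by positivity)
    _ = (2 : ℝ) ^ (-(κ : ℤ)) := by
        rw [zpow_neg, zpow_natCast]
        rw [hM]
        push_cast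
        rw [pow_add]
        field_simp
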